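/- Under the randomized rounding where each team C_i survives phase one independently with probability x_i/(2ρ) and is then kept only if no adjacent surviving team has smaller index, each team C_i is kept with probability at least x_i/(4ρ). Consequently the expected total profit of kept teams is at least (1/(4ρ)) ∑_i x_i λ_i. -/

import Mathlib

open Finset MeasureTheory ProbabilityTheory

/-- Randomized rounding: each team is kept (survives phase one and no adjacent surviving
team has smaller index) with probability at least `x i/(4ρ)`, hence the expected total
profit of kept teams is at least `(1/(4ρ)) ∑ x i λ i`. -/
theorem stmt_4 {Ω V ι : Type*} [MeasurableSpace Ω] [Fintype V] [Fintype ι]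
    [LinearOrder ι] [DecidableEq V]
    (μ : Measure Ω) [IsProbabilityMeasure μ]
    (C : ι → Finset V)
    (ρ : ℝ) (hρ : 0 < ρ) (hsize : ∀ j, ((C j).card : ℝ) ≤ ρ)
    (x lam : ι → ℝ) (hx : ∀ j, 0 ≤ x j ∧ x j ≤ 1) (hlam : ∀ j, 0 ≤ lam j)
    (hpack : ∀ u : V, ∑ j ∈ univ.filter (fun j => u ∈ C j), x j ≤ 1)
    (A : ι → Set Ω) (hA : ∀ j, MeasurableSet (A j))
    (hindep : iIndepSet A μ)
    (hprob : ∀ j, μ (A j) = ENNReal.ofReal (x j / (2 * ρ)))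
    (K : ι → Set Ω)
    (hK : ∀ i, K i = A i ∩ ⋂ j ∈ {j : ι | j < i ∧ (C j ∩ C i).Nonempty}, (A j)ᶜ) :
    (∀ i, ENNReal.ofReal (x i / (4 * ρ)) ≤ μ (K i))
    ∧ (1 / (4 * ρ)) * ∑ i, x i * lam i ≤ ∑ i, lam i * (μ (K i)).toReal := by
  have hρ2 : (0:ℝ) < 2 * ρ := by linarith
  have hρ4 : (0:ℝ) < 4 * ρ := by linarith
  set S : ι → Finset ι := fun i => univ.filter (fun j => j < i ∧ (C j ∩ C i).Nonempty)
    with hSdef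
  -- combinatorial bound: ∑_{j ∈ S i} x j ≤ ρ
  have hS : ∀ i : ι, ∑ j ∈ S i, x j ≤ ρ := by
    intro i
    have h1 : ∑ j ∈ S i, x j ≤ ∑ j : ι, ((C j ∩ C i).card : ℝ) * x j := by
      rw [hSdef, Finset.sum_filter]
      refine Finset.sum_le_sum fun j _ => ?_
      by_cases h : j < i ∧ (C j ∩ C i).Nonempty
      · simp only [if_pos h]
        have h1 : (1:ℝ) ≤ ((C j ∩ C i).card : ℝ) := by
          exact_mod_cast Finset.card_pos.mpr h.2
        nlinarith [(hx j).1]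
      · simp only [if_neg h]
        exact mul_nonneg (Nat.cast_nonneg _) (hx j).1
    have h2 : ∀ j : ι, ((C j ∩ C i).card : ℝ) * x j
        = ∑ u ∈ C i, if u ∈ C j then x j else 0 := by
      intro j
      rw [← Finset.sum_filter, Finset.filter_mem_eq_inter, Finset.sum_const,
        Finset.inter_comm, nsmul_eq_mul]
    have h3 : ∑ j : ι, ((C j ∩ C i).card : ℝ) * x j ≤ ρ := by
      calc ∑ j : ι, ((C j ∩ C i).card : ℝ) * x j
          = ∑ j : ι, ∑ u ∈ C i, if u ∈ C j then x j else 0 := by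
            exact Finset.sum_congr rfl fun j _ => h2 j
        _ = ∑ u ∈ C i, ∑ j : ι, if u ∈ C j then x j else 0 := Finset.sum_comm
        _ ≤ ∑ u ∈ C i, (1:ℝ) := by
            refine Finset.sum_le_sum fun u _ => ?_
            rw [← Finset.sum_filter]
            exact hpack u
        _ = ((C i).card : ℝ) := by simp
        _ ≤ ρ := hsize i
    linarith
  have hxnn : ∀ j, 0 ≤ x j / (2 * ρ) := fun j => div_nonneg (hx j).1 hρ2.le
  have hx4nn : ∀ j, 0 ≤ x j / (4 * ρ) := fun j => div_nonneg (hx j).1 hρ4.le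
  -- main per-index bound
  have main : ∀ i, ENNReal.ofReal (x i / (4 * ρ)) ≤ μ (K i) := by
    intro i
    -- K i = A i \ ⋃_{j ∈ S i} A j
    have hKi : K i = A i \ ⋃ j ∈ S i, A j := by
      rw [hK i]
      rw [Set.diff_eq, ← Set.compl_iUnion₂]
      congr 1
      congr 1
      ext ω
      simp [hSdef]
    have hsplit : μ (A i) ≤ μ (K i) + μ (A i ∩ ⋃ j ∈ S i, A j) := by
      calc μ (A i) = μ ((A i \ ⋃ j ∈ S i, A j) ∪ (A i ∩ ⋃ j ∈ S i, A j)) := by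
            rw [Set.diff_union_inter]
        _ ≤ μ (A i \ ⋃ j ∈ S i, A j) + μ (A i ∩ ⋃ j ∈ S i, A j) := measure_union_le _ _
        _ = μ (K i) + μ (A i ∩ ⋃ j ∈ S i, A j) := by rw [hKi]
    have hpair : ∀ j ∈ S i, μ (A i ∩ A j) = μ (A i) * μ (A j) := by
      intro j hj
      have hji : j ≠ i := by
        rw [hSdef] at hj
        simp only [Finset.mem_filter] at hj
        exact ne_of_lt hj.2.1
      have := hindep.meas_biInter ({i, j} : Finset ι)
      rw [Finset.set_biInter_insert, Finset.set_biInter_singleton,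
        Finset.prod_insert (by simpa using hji.symm), Finset.prod_singleton] at this
      exact this
    have hunion : μ (A i ∩ ⋃ j ∈ S i, A j) ≤ ∑ j ∈ S i, μ (A i) * μ (A j) := by
      rw [Set.inter_iUnion₂]
      refine le_trans (measure_biUnion_finset_le _ _) ?_
      exact Finset.sum_le_sum fun j hj => le_of_eq (hpair j hj)
    have hsum : ∑ j ∈ S i, μ (A i) * μ (A j) ≤ ENNReal.ofReal (x i / (4 * ρ)) := by
      rw [← Finset.mul_sum]
      have h1 : ∑ j ∈ S i, μ (A j) ≤ ENNReal.ofReal (1/2) := by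
        calc ∑ j ∈ S i, μ (A j) = ∑ j ∈ S i, ENNReal.ofReal (x j / (2 * ρ)) := by
              exact Finset.sum_congr rfl fun j _ => hprob j
          _ = ENNReal.ofReal (∑ j ∈ S i, x j / (2 * ρ)) :=
              (ENNReal.ofReal_sum_of_nonneg fun j _ => hxnn j).symm
          _ ≤ ENNReal.ofReal (1/2) := by
              apply ENNReal.ofReal_le_ofReal
              rw [← Finset.sum_div]
              rw [div_le_iff₀ hρ2]
              calc ∑ j ∈ S i, x j ≤ ρ := hS i
                _ = 1 / 2 * (2 * ρ) := by ring
      calc μ (A i) * ∑ j ∈ S i, μ (A j)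
          ≤ μ (A i) * ENNReal.ofReal (1/2) := by exact mul_le_mul_right h1 _
        _ = ENNReal.ofReal (x i / (2 * ρ)) * ENNReal.ofReal (1/2) := by rw [hprob i]
        _ = ENNReal.ofReal (x i / (2 * ρ) * (1/2)) :=
            (ENNReal.ofReal_mul (hxnn i)).symm
        _ = ENNReal.ofReal (x i / (4 * ρ)) := by
            congr 1
            field_simp
            ring_nf
    have hAi : μ (A i) = ENNReal.ofReal (x i / (4 * ρ)) + ENNReal.ofReal (x i / (4 * ρ)) := by
      rw [hprob i, ← ENNReal.ofReal_add (hx4nn i) (hx4nn i)]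
      congr 1
      field_simp
      ring
    have hfin : μ (A i) ≤ μ (K i) + ENNReal.ofReal (x i / (4 * ρ)) :=
      le_trans hsplit (add_le_add_right (le_trans hunion hsum) _)
    rw [hAi] at hfin
    exact ENNReal.le_of_add_le_add_right ENNReal.ofReal_ne_top hfin
  refine ⟨main, ?_⟩
  have hto : ∀ i, x i / (4 * ρ) ≤ (μ (K i)).toReal := by
    intro i
    have := ENNReal.toReal_mono (measure_ne_top μ _) (main i)
    rwa [ENNReal.toReal_ofReal (hx4nn i)] at this
  calc (1 / (4 * ρ)) * ∑ i, x i * lam i = ∑ i, lam i * (x i / (4 * ρ)) := by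
        rw [Finset.mul_sum]
        exact Finset.sum_congr rfl fun i _ => by ring
    _ ≤ ∑ i, lam i * (μ (K i)).toReal :=
        Finset.sum_le_sum fun i _ => mul_le_mul_of_nonneg_left (hto i) (hlam i)
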